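/- Let P be a left-cancellative monoid and let {X_p}_{p ∈ P} be a family of closed subspaces of a C*-algebra B such that: A := X_e is a C*-subalgebra; A·X_p ⊆ X_p, X_p·A ⊆ X_p, and X_p*·X_p ⊆ A for all p; X_p · X_q ⊆ X_{pq} for all p, q; and X_p · X_p* · X_{pq} is contained in the closed linear span of X_p · X_q for all p, q. Then X_p* · X_{pq} ⊆ X_q for all p, q ∈ P. -/

import Mathlib

open Filter Topology

/-- Auxiliary inequality: for `s ∈ [0,1]` and `m ≥ 1`, `s * (1-s)^m ≤ 1/m`. -/
private lemma stmt14_aux_ineq (s : ℝ) (h0 : 0 ≤ s) (h1 : s ≤ 1) (m : ℕ) (hm : 1 ≤ m) :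
    s * (1-s)^m ≤ 1/m := by
  have hmpos : (0:ℝ) < m := by exact_mod_cast hm
  rw [le_div_iff₀ hmpos]
  have h2 : (1 + (m:ℝ) * s) ≤ (1+s)^m := one_add_mul_le_pow (by linarith) m
  have h3 : (0:ℝ) ≤ (1-s)^m := pow_nonneg (by linarith) m
  calc s * (1-s)^m * m = (m:ℝ) * s * (1-s)^m := by ring
    _ ≤ (1 + (m:ℝ)*s) * (1-s)^m := by nlinarith
    _ ≤ (1+s)^m * (1-s)^m := by nlinarith
    _ = ((1+s)*(1-s))^m := (mul_pow _ _ _).symm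
    _ ≤ 1 := pow_le_one₀ (by nlinarith) (by nlinarith)

/-- If a family `{X_p}` of closed subspaces of a C*-algebra satisfies: `X_e` is a
C*-subalgebra, each `X_p` is an `X_e`-bimodule with `X_p* · X_p ⊆ X_e`,
`X_p · X_q ⊆ X_{pq}`, and `X_p · X_p* · X_{pq} ⊆ [X_p · X_q]`, then
`X_p* · X_{pq} ⊆ X_q` for all `p, q`. -/
theorem stmt14 {P : Type*} [Monoid P] [IsLeftCancelMul P]
    {B : Type*} [NormedRing B] [StarRing B] [CStarRing B]
    [NormedAlgebra ℂ B] [StarModule ℂ B] [CompleteSpace B]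
    (X : P → Submodule ℂ B) (hclosed : ∀ p, IsClosed (X p : Set B))
    (hAstar : ∀ a ∈ X 1, star a ∈ X 1)
    (hAmul : ∀ a ∈ X 1, ∀ b ∈ X 1, a * b ∈ X 1)
    (hleft : ∀ p : P, ∀ a ∈ X 1, ∀ x ∈ X p, a * x ∈ X p)
    (hright : ∀ p : P, ∀ x ∈ X p, ∀ a ∈ X 1, x * a ∈ X p)
    (hinner : ∀ p : P, ∀ x ∈ X p, ∀ y ∈ X p, star x * y ∈ X 1)
    (hmul : ∀ p q : P, ∀ x ∈ X p, ∀ y ∈ X q, x * y ∈ X (p * q))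
    (hfour : ∀ p q : P, ∀ x ∈ X p, ∀ y ∈ X p, ∀ z ∈ X (p * q),
      x * star y * z ∈ (Submodule.span ℂ {b : B | ∃ u ∈ X p, ∃ v ∈ X q,
        b = u * v}).topologicalClosure) :
    ∀ p q : P, ∀ x ∈ X p, ∀ y ∈ X (p * q), star x * y ∈ X q := by
  intro p q x hx y hy
  obtain hB | hB := subsingleton_or_nontrivial B
  · have h0 : star x * y = 0 := Subsingleton.elim _ _
    rw [h0]; exact (X q).zero_mem
  letI : CStarAlgebra B := ⟨⟩
  set a := star x * x with ha_def
  have haA : a ∈ X 1 := hinner p x hx x hx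
  have haSA : IsSelfAdjoint a := IsSelfAdjoint.star_mul_self x
  -- Step 1: `star x` times the closed span of `X p · X q` lands in `X q`.
  have hkey0 : ∀ w ∈ (Submodule.span ℂ {b : B | ∃ u ∈ X p, ∃ v ∈ X q,
      b = u * v}).topologicalClosure, star x * w ∈ X q := by
    intro w hw
    have hle : (Submodule.span ℂ {b : B | ∃ u ∈ X p, ∃ v ∈ X q,
        b = u * v}).topologicalClosure ≤ (X q).comap (LinearMap.mulLeft ℂ (star x)) := by
      apply Submodule.topologicalClosure_minimal
      · rw [Submodule.span_le]
        rintro b ⟨u, hu, v, hv, rfl⟩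
        show star x * (u * v) ∈ X q
        rw [← mul_assoc]
        exact hleft q _ (hinner p x hx u hu) v hv
      · exact (hclosed q).preimage (continuous_const.mul continuous_id)
    exact hle hw
  -- Step 2: key membership `a * (star x * y) ∈ X q`.
  have hkey : a * (star x * y) ∈ X q := by
    have h4 := hkey0 _ (hfour p q x hx x hx y hy)
    have heq : a * (star x * y) = star x * (x * star x * y) := by
      simp only [ha_def, mul_assoc]
    rw [heq]; exact h4
  -- trivial case: x = 0
  by_cases hM0 : ‖a‖ = 0
  · have hx0 : x = 0 := by
      have h1 : ‖x‖ * ‖x‖ = 0 := by rw [← CStarRing.norm_star_mul_self, ← ha_def, hM0]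
      have : ‖x‖ = 0 := by nlinarith [norm_nonneg x]
      exact norm_eq_zero.mp this
    rw [hx0, star_zero, zero_mul]; exact (X q).zero_mem
  have hMpos : 0 < ‖a‖ := lt_of_le_of_ne (norm_nonneg a) (Ne.symm hM0)
  set M : ℝ := ‖a‖ with hM_def
  set r : ℝ := M⁻¹ with hr_def
  have hrpos : 0 < r := inv_pos.mpr hMpos
  set b : B := 1 - r • a with hb_def
  set w : B := star x * y with hw_def
  -- Step 3: algebraic membership facts
  have hC1 : ∀ n : ℕ, ∀ z ∈ X q, b ^ n * z ∈ X q := by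
    intro n
    induction n with
    | zero => intro z hz; simpa using hz
    | succ n ih =>
      intro z hz
      have hbz : b * z = z - r • (a * z) := by
        rw [hb_def, sub_mul, one_mul, smul_mul_assoc]
      have hbzX : b * z ∈ X q := by
        rw [hbz]
        exact (X q).sub_mem hz ((X q).smul_of_tower_mem r (hleft q a haA z hz))
      have : b ^ (n+1) * z = b ^ n * (b * z) := by rw [pow_succ, mul_assoc]
      rw [this]
      exact ih _ hbzX
  have hC2 : ∀ n : ℕ, w - b ^ n * w ∈ X q := by
    intro n
    induction n with
    | zero => simpa using (X q).zero_mem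
    | succ n ih =>
      have haw : a * w ∈ X q := hkey
      have hbw : b * w = w - r • (a * w) := by
        rw [hb_def, sub_mul, one_mul, smul_mul_assoc]
      have h1 : b ^ (n+1) * w = b ^ n * w - r • (b ^ n * (a * w)) := by
        rw [pow_succ, mul_assoc, hbw, mul_sub, mul_smul_comm]
      have h2 : w - b ^ (n+1) * w
          = (w - b ^ n * w) + r • (b ^ n * (a * w)) := by
        rw [h1]; abel
      rw [h2]
      exact (X q).add_mem ih ((X q).smul_of_tower_mem r (hC1 n _ haw))
  -- Step 4: norm estimate
  have hbsa : ∀ n : ℕ, IsSelfAdjoint (b ^ n) := by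
    intro n
    have hbself : IsSelfAdjoint b := by
      rw [hb_def, ← Complex.coe_smul]
      exact (IsSelfAdjoint.one B).sub (IsSelfAdjoint.smul
        (by simp [isSelfAdjoint_iff, Complex.star_def, Complex.conj_ofReal]) haSA)
    exact hbself.pow n
  have hcfc : ∀ n : ℕ, b ^ n * a * b ^ n
      = cfc (fun t : ℝ => (1-r*t)^n * (t * (1-r*t)^n)) a := by
    intro n
    have h1 : cfc (fun t : ℝ => 1 - r * t) a = 1 - r • a := by
      rw [cfc_sub _ _ a, cfc_const_one ℝ a, cfc_const_mul_id r a]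
    have hc1 : Continuous (fun t : ℝ => 1-r*t) := continuous_const.sub (continuous_const.mul continuous_id)
    have hc2 : Continuous (fun t : ℝ => (1-r*t)^n) := hc1.pow n
    rw [cfc_mul (fun t : ℝ => (1-r*t)^n) (fun t : ℝ => t * (1-r*t)^n) a hc2.continuousOn
        (continuous_id.mul hc2).continuousOn,
      cfc_mul (fun t : ℝ => t) (fun t : ℝ => (1-r*t)^n) a continuous_id.continuousOn hc2.continuousOn,
      cfc_pow (fun t : ℝ => 1-r*t) n a hc1.continuousOn, h1, cfc_id' ℝ a, mul_assoc, ← hb_def]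
  have hnorm : ∀ n : ℕ, 1 ≤ n → ‖b ^ n * a * b ^ n‖ ≤ M / n := by
    intro n hn
    have hnpos : (0:ℝ) < n := by exact_mod_cast hn
    rw [hcfc n]
    apply norm_cfc_le (by positivity)
    intro t ht
    have ht0 : 0 ≤ t := spectrum_star_mul_self_nonneg t ht
    have htM : t ≤ M := by
      have := spectrum.norm_le_norm_of_mem ht
      rwa [Real.norm_eq_abs, abs_of_nonneg ht0] at this
    set s : ℝ := r * t with hs_def
    have hs0 : 0 ≤ s := mul_nonneg hrpos.le ht0
    have hs1 : s ≤ 1 := by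
      rw [hs_def, hr_def]
      calc M⁻¹ * t ≤ M⁻¹ * M := mul_le_mul_of_nonneg_left htM (inv_nonneg.mpr hMpos.le)
        _ = 1 := inv_mul_cancel₀ hM0
    have hts : t = M * s := by
      rw [hs_def, hr_def]
      field_simp
    have h1s : 0 ≤ 1 - s := by linarith
    have hval : (1-s)^n * (t * (1-s)^n) = M * (s * (1-s)^(2*n)) := by
      rw [hts]; ring
    rw [Real.norm_eq_abs, hval, abs_of_nonneg (by positivity)]
    have h2n : 1 ≤ 2 * n := by omega
    have := stmt14_aux_ineq s hs0 hs1 (2*n) h2n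
    push_cast at this
    calc M * (s * (1-s)^(2*n)) ≤ M * (1/(2*n)) := by
          apply mul_le_mul_of_nonneg_left this hMpos.le
      _ ≤ M / n := by
          rw [mul_one_div]
          apply div_le_div_of_nonneg_left hMpos.le hnpos
          push_cast; linarith
  have hcnorm : ∀ n : ℕ, 1 ≤ n → ‖b ^ n * star x‖ ≤ Real.sqrt (M / n) := by
    intro n hn
    have hnpos : (0:ℝ) < n := by exact_mod_cast hn
    have h1 : ‖b ^ n * star x‖ * ‖b ^ n * star x‖ = ‖b ^ n * a * b ^ n‖ := by
      rw [← CStarRing.norm_self_mul_star]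
      congr 1
      rw [star_mul, star_star, (hbsa n).star_eq, ha_def]
      simp only [mul_assoc]
    have h2 : ‖b ^ n * star x‖ * ‖b ^ n * star x‖ ≤ M / n := h1 ▸ hnorm n hn
    rw [show ∀ c : ℝ, c * c = c^2 from fun c => by ring] at h2
    exact (Real.le_sqrt (norm_nonneg _) (by positivity)).mpr h2
  -- Step 5: limit argument
  have hlimnorm : Tendsto (fun n : ℕ => ‖b ^ n * w‖) atTop (𝓝 0) := by
    apply squeeze_zero' (Eventually.of_forall fun n => norm_nonneg _)
      (g := fun n : ℕ => Real.sqrt (M / n) * ‖y‖)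
    · filter_upwards [eventually_ge_atTop 1] with n hn
      calc ‖b ^ n * w‖ = ‖(b ^ n * star x) * y‖ := by rw [hw_def, mul_assoc]
        _ ≤ ‖b ^ n * star x‖ * ‖y‖ := norm_mul_le _ _
        _ ≤ Real.sqrt (M / n) * ‖y‖ :=
            mul_le_mul_of_nonneg_right (hcnorm n hn) (norm_nonneg y)
    · have h1 : Tendsto (fun n : ℕ => M / n) atTop (𝓝 0) :=
        tendsto_const_div_atTop_nhds_zero_nat M
      have h2 := (Real.continuous_sqrt.tendsto' 0 0 (by simp)).comp h1
      simpa using h2.mul_const ‖y‖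
  have hlim : Tendsto (fun n : ℕ => w - b ^ n * w) atTop (𝓝 w) := by
    rw [tendsto_iff_norm_sub_tendsto_zero]
    simpa using hlimnorm
  have : w ∈ X q :=
    (hclosed q).mem_of_tendsto hlim (Eventually.of_forall hC2)
  exact this
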